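/- Let C_n = {(m_1,...,m_p) : m_1 ≥ m_2 ≥ ... ≥ m_p ≥ 2, and m_i ≥ m_{i+n-1} + 2 for all valid i} (Gordon-type partitions). The generating function ∑ q^{m_1+...+m_p} over all finite sequences in C_n with m_1 ≤ N satisfies the vector recursion w_N = M_n(q^N)·w_{N-1}, where w_N = (w_N^0,...,w_N^{n-1}), w_N^r is the generating function over sequences in C_n with m_1 ≤ N and m_{r+1} ≤ N-1, and M_n(x) is the n×n matrix with (M_n)_{rj} = x^{n-j} for (r+1)+j ≥ n+1 and 0 otherwise, with w_0 = (0,...,0,1). -/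

import Mathlib

/-- The matrix `M_n(x)`: with rows `r = 0,…,n-1` and 1-based columns `j = 1,…,n`,
`(M_n)_{rj} = x^{n-j}` if `(r+1)+j ≥ n+1` and `0` otherwise.  Here both indices run
over `Fin n`, the column `j0` corresponding to `j = j0 + 1`. -/
noncomputable def Mmat (n : ℕ) (x : ℝ) : Matrix (Fin n) (Fin n) ℝ :=
  fun r j => if n ≤ (r : ℕ) + (j : ℕ) + 1 then x ^ (n - 1 - (j : ℕ)) else 0

/-- Gordon-type condition: `(m_1,…,m_p)` weakly decreasing, all parts `≥ 2` and `≤ N`,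
`m_i ≥ m_{i+n-1} + 2`, and `m_{r+1} ≤ N - 1` if `p ≥ r + 1` (indices here 0-based). -/
def GordonCond (n N r : ℕ) (l : List ℕ) : Prop :=
  l.Pairwise (· ≥ ·) ∧ (∀ m ∈ l, 2 ≤ m) ∧
    (∀ i, i + (n - 1) < l.length → l.getD (i + (n - 1)) 0 + 2 ≤ l.getD i 0) ∧
    (∀ m ∈ l, m ≤ N) ∧ (r + 1 ≤ l.length → l.getD r 0 ≤ N - 1)

/-- The vector of generating functions `w_N = (w_N^0,…,w_N^{n-1})`, with the convention
`w_0 = (0,…,0,1)`. -/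
noncomputable def wvec (n : ℕ) (q : ℝ) : ℕ → Fin n → ℝ := fun N r =>
  if N = 0 then (if (r : ℕ) = n - 1 then 1 else 0)
  else ∑' l : { l : List ℕ // GordonCond n N (r : ℕ) l }, q ^ (l : List ℕ).sum


lemma getD_mem_of_lt (l : List ℕ) {j : ℕ} (hj : j < l.length) : l.getD j 0 ∈ l := by
  rw [List.getD_eq_getElem l 0 hj]; exact List.getElem_mem hj

lemma getD_anti {l : List ℕ} (h : l.Pairwise (· ≥ ·)) {i j : ℕ} (hij : i ≤ j)
    (hj : j < l.length) : l.getD j 0 ≤ l.getD i 0 := by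
  have hi : i < l.length := lt_of_le_of_lt hij hj
  rw [List.getD_eq_getElem l 0 hj, List.getD_eq_getElem l 0 hi]
  exact h.rel_get_of_le (a := ⟨i, hi⟩) (b := ⟨j, hj⟩) hij

lemma gordon_chain {n : ℕ} {N r : ℕ} {l : List ℕ} (hl : GordonCond n N r l) :
    ∀ k i, i + (n - 1) * k < l.length →
      l.getD (i + (n - 1) * k) 0 + 2 * k ≤ l.getD i 0 := by
  intro k
  induction k with
  | zero => simp
  | succ k ih =>
    intro i hik
    have heq : i + (n-1) * (k+1) = i + (n-1)*k + (n-1) := by ring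
    rw [heq] at hik ⊢
    have h2 := hl.2.2.1 (i + (n-1)*k) hik
    have h3 := ih i (by omega)
    omega

lemma gordon_length {n N r : ℕ} (hn : 1 < n) {l : List ℕ} (hl : GordonCond n N r l) :
    l.length ≤ (n - 1) * N := by
  by_contra h
  push_neg at h
  have h0 : 0 < l.length := by omega
  have hc := gordon_chain hl N 0 (by omega)
  simp only [zero_add] at hc
  have hg2 : 2 ≤ l.getD ((n-1)*N) 0 := hl.2.1 _ (getD_mem_of_lt _ (by omega))
  have hgN : l.getD 0 0 ≤ N := hl.2.2.2.1 _ (getD_mem_of_lt _ h0)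
  omega

lemma gordon_finite (n N r : ℕ) (hn : 1 < n) : {l : List ℕ | GordonCond n N r l}.Finite := by
  have hfin : {l : List (Fin (N+1)) | l.length ≤ (n-1)*N}.Finite :=
    List.finite_length_le _ _
  apply Set.Finite.subset (hfin.image (List.map Fin.val))
  intro l hl
  simp only [Set.mem_setOf_eq] at hl
  have hb : ∀ m ∈ l, m < N + 1 := fun m hm => by
    have := hl.2.2.2.1 m hm; omega
  refine ⟨l.pmap (fun m hm => (⟨m, hm⟩ : Fin (N+1))) hb, ?_, ?_⟩
  · simp only [Set.mem_setOf_eq, List.length_pmap]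
    exact gordon_length hn hl
  · rw [List.map_pmap]
    simp

lemma sorted_decomp {N : ℕ} : ∀ {l : List ℕ}, l.Pairwise (· ≥ ·) → (∀ m ∈ l, m ≤ N) →
    l = List.replicate (l.count N) N ++ l.drop (l.count N) := by
  intro l
  induction l with
  | nil => simp
  | cons a t ih =>
    intro hs hb
    by_cases ha : a = N
    · subst ha
      have ht := ih hs.of_cons (fun m hm => hb m (List.mem_cons_of_mem _ hm))
      rw [List.count_cons_self]
      calc a :: t = a :: (List.replicate (t.count a) a ++ t.drop (t.count a)) := by rw [← ht]
        _ = List.replicate (t.count a + 1) a ++ (a :: t).drop (t.count a + 1) := by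
            rw [List.replicate_succ]; simp
    · have haN : a < N := lt_of_le_of_ne (hb a List.mem_cons_self) ha
      have hcnt : (a :: t).count N = 0 := by
        rw [List.count_eq_zero]
        intro hmem
        rcases List.mem_cons.1 hmem with h | h
        · omega
        · have := (List.pairwise_cons.1 hs).1 N h; omega
      rw [hcnt]; simp

lemma gordon_fwd {n N r : ℕ} (hn : 1 < n) (hN : 2 ≤ N) (hr : r < n) {l : List ℕ}
    (hl : GordonCond n N r l) :
    l.count N ≤ r ∧ GordonCond n (N-1) (n-1-l.count N) (l.drop (l.count N)) := by
  set k := l.count N with hk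
  set l' := l.drop k with hl'
  have hdec : l = List.replicate k N ++ l' := sorted_decomp hl.1 hl.2.2.2.1
  have hkl : k ≤ l.length := List.count_le_length
  have hlen : l.length = k + l'.length := by
    conv_lhs => rw [hdec]
    simp
  have hshift : ∀ j, l.getD (j + k) 0 = l'.getD j 0 := by
    intro j
    conv_lhs => rw [hdec]
    rw [List.getD_append_right _ _ _ _ (by simp)]
    simp
  have hrep : ∀ i < k, l.getD i 0 = N := by
    intro i hi
    conv_lhs => rw [hdec]
    rw [List.getD_append _ _ _ _ (by simpa using hi)]
    rw [List.getD_eq_getElem _ _ (by simpa using hi)]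
    simp
  have hcnt' : l'.count N = 0 := by
    have : l.count N = k + l'.count N := by
      conv_lhs => rw [hdec]
      simp [List.count_append, List.count_replicate]
    omega
  have hkr : k ≤ r := by
    by_contra hc
    push_neg at hc
    have h1 : r + 1 ≤ l.length := by omega
    have h2 := hl.2.2.2.2 h1
    rw [hrep r hc] at h2
    omega
  refine ⟨hkr, ?_, ?_, ?_, ?_, ?_⟩
  · exact List.Pairwise.sublist (List.drop_sublist k l) hl.1
  · exact fun m hm => hl.2.1 m ((List.drop_sublist k l).mem hm)
  · intro i hi
    rw [← hshift, ← hshift]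
    have : (i + (n-1)) + k = (i + k) + (n-1) := by ring
    rw [this]
    exact hl.2.2.1 (i + k) (by omega)
  · intro m hm
    have h1 : m ≤ N := hl.2.2.2.1 m ((List.drop_sublist k l).mem hm)
    have h2 : m ≠ N := by
      intro h; subst h
      exact absurd (List.count_eq_zero.1 hcnt') (by simpa using hm)
    omega
  · intro hlen'
    have hnl : n ≤ l.length := by omega
    rw [← hshift]
    have hidx : n - 1 - k + k = n - 1 := by omega
    rw [hidx]
    have h1 := hl.2.2.1 0 (by omega)
    simp only [zero_add] at h1
    have h2 : l.getD 0 0 ≤ N := hl.2.2.2.1 _ (getD_mem_of_lt _ (by omega))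
    omega

lemma gordon_bwd {n N r k : ℕ} (hn : 1 < n) (hN : 2 ≤ N) (hr : r < n) (hk : k ≤ r)
    {l' : List ℕ} (hl' : GordonCond n (N-1) (n-1-k) l') :
    GordonCond n N r (List.replicate k N ++ l') := by
  set l := List.replicate k N ++ l' with hl
  have hb' : ∀ m ∈ l', m ≤ N - 1 := hl'.2.2.2.1
  have hlen : l.length = k + l'.length := by simp [hl]
  have hshift : ∀ j, l.getD (j + k) 0 = l'.getD j 0 := by
    intro j
    rw [hl, List.getD_append_right _ _ _ _ (by simp)]
    simp
  have hrep : ∀ i < k, l.getD i 0 = N := by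
    intro i hi
    rw [hl, List.getD_append _ _ _ _ (by simpa using hi),
      List.getD_eq_getElem _ _ (by simpa using hi)]
    simp
  refine ⟨?_, ?_, ?_, ?_, ?_⟩
  · rw [hl, List.pairwise_append]
    refine ⟨List.pairwise_replicate.2 (Or.inr le_rfl), hl'.1, ?_⟩
    intro a ha b hb
    rw [List.eq_of_mem_replicate ha]
    have := hb' b hb
    omega
  · intro m hm
    rcases List.mem_append.1 hm with h | h
    · rw [List.eq_of_mem_replicate h]; omega
    · exact hl'.2.1 m h
  · intro i hi
    rw [hlen] at hi
    by_cases hik : i < k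
    · rw [hrep i hik]
      have hj : i + (n-1) = (i + (n-1) - k) + k := by omega
      rw [hj, hshift]
      set j := i + (n-1) - k with hjd
      have hjlen : j < l'.length := by omega
      have hmono : l'.getD j 0 ≤ l'.getD (n-1-k) 0 := getD_anti hl'.1 (by omega) hjlen
      have h5 := hl'.2.2.2.2 (by omega)
      omega
    · push_neg at hik
      have g1 : l.getD i 0 = l'.getD (i-k) 0 := by
        conv_lhs => rw [show i = (i-k)+k by omega]
        rw [hshift]
      have g2 : l.getD (i+(n-1)) 0 = l'.getD ((i-k)+(n-1)) 0 := by
        conv_lhs => rw [show i+(n-1) = ((i-k)+(n-1))+k by omega]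
        rw [hshift]
      rw [g1, g2]
      exact hl'.2.2.1 (i-k) (by omega)
  · intro m hm
    rcases List.mem_append.1 hm with h | h
    · rw [List.eq_of_mem_replicate h]
    · have := hb' m h; omega
  · intro hrl
    rw [hlen] at hrl
    conv_lhs => rw [show r = (r-k)+k by omega]
    rw [hshift]
    have hmem : l'.getD (r-k) 0 ∈ l' := getD_mem_of_lt _ (by omega)
    exact hb' _ hmem

lemma sigma_mk_eq {n N r : ℕ} {k₁ k₂ : Fin (r+1)} (h : k₁ = k₂)
    {l₁ : {l : List ℕ // GordonCond n (N-1) (n-1-(k₁:ℕ)) l}}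
    {l₂ : {l : List ℕ // GordonCond n (N-1) (n-1-(k₂:ℕ)) l}} (hl : l₁.1 = l₂.1) :
    (⟨k₁, l₁⟩ : Σ k : Fin (r+1), {l : List ℕ // GordonCond n (N-1) (n-1-(k:ℕ)) l}) =
      ⟨k₂, l₂⟩ := by
  subst h; exact congrArg _ (Subtype.ext hl)

noncomputable def gordonEquiv (n N r : ℕ) (hn : 1 < n) (hN : 2 ≤ N) (hr : r < n) :
    (Σ k : Fin (r+1), {l : List ℕ // GordonCond n (N-1) (n-1-(k:ℕ)) l}) ≃
      {l : List ℕ // GordonCond n N r l} where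
  toFun x := ⟨List.replicate (x.1 : ℕ) N ++ x.2.1,
    gordon_bwd hn hN hr (Nat.lt_succ_iff.1 x.1.2) x.2.2⟩
  invFun l := ⟨⟨l.1.count N, Nat.lt_succ_iff.2 (gordon_fwd hn hN hr l.2).1⟩,
    ⟨l.1.drop (l.1.count N), (gordon_fwd hn hN hr l.2).2⟩⟩
  left_inv := by
    rintro ⟨⟨k, hk⟩, l', hl'⟩
    have hcnt0 : l'.count N = 0 := List.count_eq_zero.2 (fun h => by
      have := hl'.2.2.2.1 N h; omega)
    have hc : (List.replicate k N ++ l').count N = k := by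
      rw [List.count_append, List.count_replicate, hcnt0]; simp
    have hd : (List.replicate k N ++ l').drop ((List.replicate k N ++ l').count N) = l' := by
      rw [hc]
      have := List.drop_left (l₁ := List.replicate k N) (l₂ := l')
      simpa using this
    exact sigma_mk_eq (Fin.ext hc) hd
  right_inv := by
    rintro ⟨l, hl⟩
    exact Subtype.ext (sorted_decomp hl.1 hl.2.2.2.1).symm

theorem gordon_recursion (n : ℕ) (hn : 1 < n) (q : ℝ) (N : ℕ) (hN : 1 ≤ N) :
    wvec n q N = (Mmat n (q ^ N)).mulVec (wvec n q (N - 1)) := by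
  funext r
  have hr : (r : ℕ) < n := r.2
  rw [Matrix.mulVec, dotProduct]
  by_cases hN1 : N = 1
  · subst hN1
    -- LHS
    have hnil : GordonCond n 1 (r : ℕ) [] := by
      refine ⟨List.Pairwise.nil, by simp, by simp, by simp, by simp⟩
    have huniq : ∀ l : List ℕ, GordonCond n 1 (r : ℕ) l → l = [] := by
      intro l hl
      cases l with
      | nil => rfl
      | cons a t =>
        have h1 := hl.2.1 a List.mem_cons_self
        have h2 := hl.2.2.2.1 a List.mem_cons_self
        omega
    have hlhs : wvec n q 1 r = 1 := by
      rw [wvec]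
      rw [if_neg one_ne_zero]
      rw [tsum_eq_single (⟨[], hnil⟩ : {l : List ℕ // GordonCond n 1 (r : ℕ) l})
        (fun b hb => absurd (Subtype.ext (huniq b.1 b.2)) hb)]
      simp
    rw [hlhs]
    rw [Finset.sum_eq_single (⟨n-1, by omega⟩ : Fin n)]
    · rw [wvec]
      simp only [if_pos rfl]
      rw [Mmat]
      simp only
      rw [if_pos (by omega), if_pos (by simp)]
      simp
    · intro b _ hb
      have hbne : (b : ℕ) ≠ n - 1 := fun h => hb (Fin.ext (by simpa using h))
      rw [wvec]
      simp [hbne]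
    · intro h
      exact absurd (Finset.mem_univ _) h
  · have hN2 : 2 ≤ N := by omega
    have hN0 : N ≠ 0 := by omega
    have hN10 : N - 1 ≠ 0 := by omega
    haveI hf1 : Finite {l : List ℕ // GordonCond n N (r : ℕ) l} :=
      (gordon_finite n N (r : ℕ) hn).to_subtype
    haveI hf2 : ∀ j : ℕ, Finite {l : List ℕ // GordonCond n (N-1) j l} :=
      fun j => (gordon_finite n (N-1) j hn).to_subtype
    rw [wvec]
    rw [if_neg hN0]
    rw [← (gordonEquiv n N (r : ℕ) hn hN2 hr).tsum_eq]
    rw [Summable.tsum_sigma Summable.of_finite]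
    rw [tsum_fintype]
    have hterm : ∀ (k : Fin ((r:ℕ)+1))
        (l : {l : List ℕ // GordonCond n (N-1) (n-1-(k:ℕ)) l}),
        q ^ (((gordonEquiv n N (r:ℕ) hn hN2 hr) ⟨k, l⟩ : List ℕ).sum)
          = (q ^ N) ^ (k : ℕ) * q ^ (l : List ℕ).sum := by
      intro k l
      have : ((gordonEquiv n N (r:ℕ) hn hN2 hr) ⟨k, l⟩ : List ℕ) =
          List.replicate (k : ℕ) N ++ (l : List ℕ) := rfl
      rw [this, List.sum_append, List.sum_replicate, smul_eq_mul, pow_add, ← pow_mul,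
        mul_comm (k : ℕ) N]
    have hLHS : ∀ k : Fin ((r:ℕ)+1),
        (∑' l : {l : List ℕ // GordonCond n (N-1) (n-1-(k:ℕ)) l},
          q ^ (((gordonEquiv n N (r:ℕ) hn hN2 hr) ⟨k, l⟩ : List ℕ).sum))
        = (q ^ N) ^ (k : ℕ) * ∑' l : {l : List ℕ // GordonCond n (N-1) (n-1-(k:ℕ)) l},
            q ^ (l : List ℕ).sum := by
      intro k
      rw [tsum_congr (hterm k), tsum_mul_left]
    rw [Finset.sum_congr rfl (fun k _ => hLHS k)]
    -- RHS manipulation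
    have hw : ∀ j : Fin n, wvec n q (N-1) j =
        ∑' l : {l : List ℕ // GordonCond n (N-1) (j : ℕ) l}, q ^ (l : List ℕ).sum := by
      intro j; rw [wvec, if_neg hN10]
    have hRHS : ∀ j : Fin n, Mmat n (q^N) r j * wvec n q (N-1) j =
        (if n ≤ (r:ℕ) + (j:ℕ) + 1 then
          (q^N) ^ (n-1-(j:ℕ)) * ∑' l : {l : List ℕ // GordonCond n (N-1) (j : ℕ) l},
            q ^ (l : List ℕ).sum
         else 0) := by
      intro j
      rw [hw, Mmat]
      simp only [ite_mul, zero_mul]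
    rw [Finset.sum_congr rfl (fun j _ => hRHS j), Finset.sum_ite, Finset.sum_const_zero,
      add_zero]
    refine Finset.sum_nbij' (i := fun k => (⟨n-1-(k:ℕ), by omega⟩ : Fin n))
      (j := fun jj => (⟨min (n-1-(jj:ℕ)) (r:ℕ), by omega⟩ : Fin ((r:ℕ)+1))) ?_ ?_ ?_ ?_ ?_
    · intro k _
      simp only [Finset.mem_filter, Finset.mem_univ, true_and]
      have := Nat.lt_succ_iff.1 k.2
      omega
    · intro jj hjj
      exact Finset.mem_univ _
    · intro k _
      apply Fin.ext
      have := Nat.lt_succ_iff.1 k.2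
      simp only [Fin.val_mk]
      omega
    · intro jj hjj
      simp only [Finset.mem_filter, Finset.mem_univ, true_and] at hjj
      apply Fin.ext
      have := jj.2
      simp only [Fin.val_mk]
      omega
    · intro k _
      have hk := Nat.lt_succ_iff.1 k.2
      have hco : n - 1 - (n-1-(k:ℕ)) = (k:ℕ) := by omega
      simp only [Fin.val_mk, hco]
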